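/- Let $r$ be any complex number with $|r| = 1$. For complex numbers $z_1, z_2, z_3, z_4$, define $D(z_1, z_2, z_3, z_4) = r(|z_3|^2 + |z_4|^2) - i\overline{r}(|z_1|^2 + |z_2|^2) + (z_1\overline{z_3} + z_2\overline{z_4}) - i(\overline{z_1} z_3 + \overline{z_2} z_4)$. Then the infimum of $|D(z_1, z_2, z_3, z_4)|^2$ over all Gaussian integers $z_1, z_2, z_3, z_4$, not all zero, is at most $1/2$; i.e., no choice of unit-modulus design coefficient $r$ can achieve a coding gain exceeding $1/2$ over integer-coordinate constellations. -/

import Mathlib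

open Complex ComplexConjugate

/-- A Gaussian integer: a complex number whose real and imaginary parts are integers. -/
def IsGaussianInt (z : ℂ) : Prop := ∃ a b : ℤ, z = (a : ℂ) + (b : ℂ) * Complex.I

theorem stmt_13 (r : ℂ) (hr : ‖r‖ = 1) :
    sInf {y : ℝ | ∃ z₁ z₂ z₃ z₄ : ℂ,
        IsGaussianInt z₁ ∧ IsGaussianInt z₂ ∧ IsGaussianInt z₃ ∧ IsGaussianInt z₄ ∧
        ¬ (z₁ = 0 ∧ z₂ = 0 ∧ z₃ = 0 ∧ z₄ = 0) ∧
        y = ‖(r * ((Complex.normSq z₃ : ℂ) + (Complex.normSq z₄ : ℂ)) -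
              Complex.I * conj r * ((Complex.normSq z₁ : ℂ) + (Complex.normSq z₂ : ℂ)) +
              (z₁ * conj z₃ + z₂ * conj z₄) -
              Complex.I * (conj z₁ * z₃ + conj z₂ * z₄))‖ ^ 2} ≤ 1 / 2 := by
  have hn : Complex.normSq r = 1 := by
    rw [← Complex.sq_norm, hr]; norm_num
  have hre : r.re * r.re + r.im * r.im = 1 := by
    rw [Complex.normSq_apply] at hn; exact hn
  have ht2 : (r.re - r.im) ^ 2 ≤ 2 := by nlinarith [sq_nonneg (r.re + r.im)]
  have key : ∀ z₁ z₂ z₃ z₄ : ℂ, IsGaussianInt z₁ → IsGaussianInt z₂ →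
      IsGaussianInt z₃ → IsGaussianInt z₄ → ¬ (z₁ = 0 ∧ z₂ = 0 ∧ z₃ = 0 ∧ z₄ = 0) →
      ∀ c : ℝ,
      (r * ((Complex.normSq z₃ : ℂ) + (Complex.normSq z₄ : ℂ)) -
              Complex.I * conj r * ((Complex.normSq z₁ : ℂ) + (Complex.normSq z₂ : ℂ)) +
              (z₁ * conj z₃ + z₂ * conj z₄) -
              Complex.I * (conj z₁ * z₃ + conj z₂ * z₄)) = (c : ℂ) * (1 - I) →
      c ^ 2 ≤ 1 / 4 →
      sInf {y : ℝ | ∃ z₁ z₂ z₃ z₄ : ℂ,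
        IsGaussianInt z₁ ∧ IsGaussianInt z₂ ∧ IsGaussianInt z₃ ∧ IsGaussianInt z₄ ∧
        ¬ (z₁ = 0 ∧ z₂ = 0 ∧ z₃ = 0 ∧ z₄ = 0) ∧
        y = ‖(r * ((Complex.normSq z₃ : ℂ) + (Complex.normSq z₄ : ℂ)) -
              Complex.I * conj r * ((Complex.normSq z₁ : ℂ) + (Complex.normSq z₂ : ℂ)) +
              (z₁ * conj z₃ + z₂ * conj z₄) -
              Complex.I * (conj z₁ * z₃ + conj z₂ * z₄))‖ ^ 2} ≤ 1 / 2 := by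
    intro z₁ z₂ z₃ z₄ g₁ g₂ g₃ g₄ hnz c hE hc
    have habs : ‖(c : ℂ) * (1 - I)‖ ^ 2 = 2 * c ^ 2 := by
      rw [Complex.sq_norm, Complex.normSq_mul]
      simp [Complex.normSq_apply]
      ring
    have hmem : 2 * c ^ 2 ∈ {y : ℝ | ∃ z₁ z₂ z₃ z₄ : ℂ,
        IsGaussianInt z₁ ∧ IsGaussianInt z₂ ∧ IsGaussianInt z₃ ∧ IsGaussianInt z₄ ∧
        ¬ (z₁ = 0 ∧ z₂ = 0 ∧ z₃ = 0 ∧ z₄ = 0) ∧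
        y = ‖(r * ((Complex.normSq z₃ : ℂ) + (Complex.normSq z₄ : ℂ)) -
              Complex.I * conj r * ((Complex.normSq z₁ : ℂ) + (Complex.normSq z₂ : ℂ)) +
              (z₁ * conj z₃ + z₂ * conj z₄) -
              Complex.I * (conj z₁ * z₃ + conj z₂ * z₄))‖ ^ 2} :=
      ⟨z₁, z₂, z₃, z₄, g₁, g₂, g₃, g₄, hnz, by rw [hE, habs]⟩
    have hbdd : BddBelow {y : ℝ | ∃ z₁ z₂ z₃ z₄ : ℂ,
        IsGaussianInt z₁ ∧ IsGaussianInt z₂ ∧ IsGaussianInt z₃ ∧ IsGaussianInt z₄ ∧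
        ¬ (z₁ = 0 ∧ z₂ = 0 ∧ z₃ = 0 ∧ z₄ = 0) ∧
        y = ‖(r * ((Complex.normSq z₃ : ℂ) + (Complex.normSq z₄ : ℂ)) -
              Complex.I * conj r * ((Complex.normSq z₁ : ℂ) + (Complex.normSq z₂ : ℂ)) +
              (z₁ * conj z₃ + z₂ * conj z₄) -
              Complex.I * (conj z₁ * z₃ + conj z₂ * z₄))‖ ^ 2} := by
      refine ⟨0, fun y hy => ?_⟩
      obtain ⟨w₁, w₂, w₃, w₄, _, _, _, _, _, hy⟩ := hy
      rw [hy]; positivity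
    have := csInf_le hbdd hmem
    linarith
  have g1 : IsGaussianInt 1 := ⟨1, 0, by simp⟩
  have g0 : IsGaussianInt 0 := ⟨0, 0, by simp⟩
  have gI : IsGaussianInt I := ⟨0, 1, by simp⟩
  have gmI : IsGaussianInt (-I) := ⟨0, -1, by simp⟩
  have g1pI : IsGaussianInt (1 + I) := ⟨1, 1, by simp⟩
  have g1mI : IsGaussianInt (1 - I) := ⟨1, -1, by push_cast; ring⟩
  rcases le_or_gt (r.re - r.im) (-(1/2)) with h1 | h1
  · -- c = t + 1, tuple (1,0,I,0)
    exact key 1 0 I 0 g1 g0 gI g0 (by simp) (r.re - r.im + 1)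
      (by apply Complex.ext <;> simp [Complex.normSq_apply] <;> ring)
      (by nlinarith)
  rcases le_or_gt (r.re - r.im) (-(1/4)) with h2 | h2
  · -- c = 3t + 1, tuple (1, 1+I, -I, 1+I)
    exact key 1 (1 + I) (-I) (1 + I) g1 g1pI gmI g1pI (by simp) (3 * (r.re - r.im) + 1)
      (by apply Complex.ext <;> simp [Complex.normSq_apply] <;> ring)
      (by nlinarith)
  rcases le_or_gt (r.re - r.im) (1/4) with h3 | h3
  · -- c = 2t, tuple (1, 1, 1, -I)
    exact key 1 1 1 (-I) g1 g1 g1 gmI (by simp) (2 * (r.re - r.im))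
      (by apply Complex.ext <;> simp [Complex.normSq_apply] <;> ring)
      (by nlinarith)
  rcases le_or_gt (r.re - r.im) (1/2) with h4 | h4
  · -- c = 3t - 1, tuple (1, 1+I, I, 1-I)
    exact key 1 (1 + I) I (1 - I) g1 g1pI gI g1mI (by simp) (3 * (r.re - r.im) - 1)
      (by apply Complex.ext <;> simp [Complex.normSq_apply] <;> ring)
      (by nlinarith)
  · -- c = t - 1, tuple (1,0,-I,0)
    exact key 1 0 (-I) 0 g1 g0 gmI g0 (by simp) (r.re - r.im - 1)
      (by apply Complex.ext <;> simp [Complex.normSq_apply] <;> ring)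
      (by nlinarith)
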